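/- Let R ≥ 1 and δ ∈ ℕ with δ ≤ R−1. Then N(R,δ) = C(R−1,δ); that is, the number of permutations of Fin R with inversion number exactly δ equals the number of permutations of Fin (R−1) with inversion number at most δ. -/

import Mathlib

/-- The inversion number of a permutation `σ` of `Fin n`: the number of pairs
`(i, j)` with `i < j` and `σ i > σ j`. -/
def invNum (n : ℕ) (σ : Equiv.Perm (Fin n)) : ℕ :=
  (Finset.univ.filter (fun p : Fin n × Fin n => p.1 < p.2 ∧ σ p.2 < σ p.1)).card

/-- `Nperm r d` is the number of permutations of `Fin r` with inversion number exactly `d`. -/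
def Nperm (r d : ℕ) : ℕ :=
  (Finset.univ.filter (fun σ : Equiv.Perm (Fin r) => invNum r σ = d)).card

/-- `Cperm r d` is the number of permutations of `Fin r` with inversion number at most `d`. -/
def Cperm (r d : ℕ) : ℕ :=
  (Finset.univ.filter (fun σ : Equiv.Perm (Fin r) => invNum r σ ≤ d)).card

open Finset

def ins {n : ℕ} (p : Fin (n+1)) (e : Equiv.Perm (Fin n)) : Equiv.Perm (Fin (n+1)) :=
  (finSuccEquiv' p).trans ((e.optionCongr).trans (finSuccEquiv' (Fin.last n)).symm)

@[simp] lemma ins_self {n : ℕ} (p : Fin (n+1)) (e : Equiv.Perm (Fin n)) :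
    ins p e p = Fin.last n := by
  simp [ins, finSuccEquiv'_at, finSuccEquiv'_symm_none]

@[simp] lemma ins_succAbove {n : ℕ} (p : Fin (n+1)) (e : Equiv.Perm (Fin n)) (i : Fin n) :
    ins p e (p.succAbove i) = (e i).castSucc := by
  simp [ins, finSuccEquiv'_succAbove, finSuccEquiv'_symm_some, Fin.succAbove_last]

lemma inv_ins {n : ℕ} (p : Fin (n+1)) (e : Equiv.Perm (Fin n)) :
    invNum (n+1) (ins p e) = invNum n e + (n - p.val) := by
  have key : (Finset.univ.filter
      (fun q : Fin (n+1) × Fin (n+1) => q.1 < q.2 ∧ ins p e q.2 < ins p e q.1)) =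
      ((Finset.univ.filter (fun q : Fin n × Fin n => q.1 < q.2 ∧ e q.2 < e q.1)).map
        ((p.succAboveEmb).prodMap (p.succAboveEmb))) ∪
      ((Finset.Ioi p).map ⟨fun j => (p, j), fun a b h => congrArg Prod.snd h⟩) := by
    ext ⟨i, j⟩
    simp only [mem_filter, mem_univ, true_and, mem_union, mem_map,
      Function.Embedding.coe_prodMap, Function.Embedding.coeFn_mk, Fin.coe_succAboveEmb,
      mem_Ioi, Prod.exists, Prod.map_apply, Prod.mk.injEq]
    constructor
    · rintro ⟨hij, hlt⟩
      rcases eq_or_ne i p with rfl | hi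
      · exact Or.inr ⟨j, hij, rfl⟩
      · rcases eq_or_ne j p with rfl | hj
        · exfalso
          rw [ins_self] at hlt
          exact absurd (Fin.le_last _) (not_le.mpr hlt)
        · obtain ⟨a, rfl⟩ := Fin.exists_succAbove_eq hi
          obtain ⟨b, rfl⟩ := Fin.exists_succAbove_eq hj
          refine Or.inl ⟨a, b, ⟨Fin.succAbove_lt_succAbove_iff.mp hij, ?_⟩, rfl, rfl⟩
          rw [ins_succAbove, ins_succAbove, Fin.castSucc_lt_castSucc_iff] at hlt
          exact hlt
    · rintro (⟨a, b, ⟨hab, hlt⟩, rfl, rfl⟩ | ⟨j, hj, rfl, rfl⟩)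
      · exact ⟨Fin.succAbove_lt_succAbove_iff.mpr hab, by
          rw [ins_succAbove, ins_succAbove]; exact Fin.castSucc_lt_castSucc_iff.mpr hlt⟩
      · refine ⟨hj, ?_⟩
        rw [ins_self]
        rcases eq_or_ne j p with rfl | hjp
        · exact absurd hj (lt_irrefl _)
        · obtain ⟨b, rfl⟩ := Fin.exists_succAbove_eq hjp
          rw [ins_succAbove]
          exact Fin.castSucc_lt_last _
  have hdisj : Disjoint
      ((Finset.univ.filter (fun q : Fin n × Fin n => q.1 < q.2 ∧ e q.2 < e q.1)).map
        ((p.succAboveEmb).prodMap (p.succAboveEmb)))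
      ((Finset.Ioi p).map ⟨fun j => (p, j), fun a b h => congrArg Prod.snd h⟩) := by
    rw [Finset.disjoint_left]
    rintro ⟨i, j⟩ h1 h2
    simp only [mem_map, Function.Embedding.coe_prodMap, Prod.map_apply, Prod.exists,
      Function.Embedding.coeFn_mk, mem_Ioi, Prod.mk.injEq, Fin.coe_succAboveEmb] at h1 h2
    obtain ⟨a, b, _, rfl, rfl⟩ := h1
    obtain ⟨c, _, hp⟩ := h2
    exact Fin.succAbove_ne p a (congrArg Prod.fst hp).symm
  rw [invNum, key, Finset.card_union_of_disjoint hdisj, Finset.card_map, Finset.card_map,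
    Fin.card_Ioi, invNum]
  norm_num

lemma ins_inj {n : ℕ} {p₁ p₂ : Fin (n+1)} {e₁ e₂ : Equiv.Perm (Fin n)}
    (h : ins p₁ e₁ = ins p₂ e₂) : p₁ = p₂ ∧ e₁ = e₂ := by
  have hp : p₁ = p₂ := by
    have h1 : ins p₂ e₂ p₁ = Fin.last n := by rw [← h, ins_self]
    have h2 : ins p₂ e₂ p₂ = Fin.last n := ins_self _ _
    exact (ins p₂ e₂).injective (h1.trans h2.symm)
  subst hp
  refine ⟨rfl, Equiv.ext fun i => ?_⟩
  have h1 : ins p₁ e₁ (p₁.succAbove i) = ins p₁ e₂ (p₁.succAbove i) := by rw [h]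
  rw [ins_succAbove, ins_succAbove] at h1
  exact Fin.castSucc_injective n h1

lemma exists_ins {n : ℕ} (σ : Equiv.Perm (Fin (n+1))) : ∃ p e, ins p e = σ := by
  set p := σ.symm (Fin.last n) with hpdef
  have hp : σ p = Fin.last n := σ.apply_symm_apply _
  set f := ((finSuccEquiv' p).symm.trans (σ.trans (finSuccEquiv' (Fin.last n)))) with hf
  refine ⟨p, Equiv.removeNone f, Equiv.ext fun y => ?_⟩
  rcases eq_or_ne y p with rfl | hy
  · rw [ins_self, hp]
  · obtain ⟨x, rfl⟩ := Fin.exists_succAbove_eq hy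
    rw [ins_succAbove]
    have hne : σ (p.succAbove x) ≠ Fin.last n := by
      intro hcon
      exact Fin.succAbove_ne p x (σ.injective (hcon.trans hp.symm))
    obtain ⟨b, hb⟩ := Fin.exists_succAbove_eq hne
    have hfx : f (some x) = some b := by
      simp only [hf, Equiv.trans_apply, finSuccEquiv'_symm_some]
      rw [← hb, finSuccEquiv'_succAbove]
    have h2 : some (Equiv.removeNone f x) = some b :=
      (Equiv.removeNone_some f ⟨b, hfx⟩).trans hfx
    rw [Option.some_inj] at h2
    rw [h2, ← hb, Fin.succAbove_last]

theorem stmt3' (n δ : ℕ) (hδ : δ ≤ n) :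
    (Finset.univ.filter (fun σ : Equiv.Perm (Fin (n+1)) => invNum (n+1) σ = δ)).card =
    (Finset.univ.filter (fun σ : Equiv.Perm (Fin n) => invNum n σ ≤ δ)).card := by
  symm
  apply Finset.card_bij (fun e _ => ins ⟨n - (δ - invNum n e), by omega⟩ e)
  · intro e he
    simp only [mem_filter, mem_univ, true_and] at he ⊢
    rw [inv_ins]
    simp only
    omega
  · intro e₁ h₁ e₂ h₂ h
    exact (ins_inj h).2
  · intro σ hσ
    simp only [mem_filter, mem_univ, true_and] at hσ
    obtain ⟨p, e, rfl⟩ := exists_ins σ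
    rw [inv_ins] at hσ
    have hp : p.val ≤ n := Nat.lt_succ_iff.mp p.isLt
    refine ⟨e, ?_, ?_⟩
    · simp only [mem_filter, mem_univ, true_and]; omega
    · congr 1
      exact Fin.ext (by simp only; omega)


/-- For `R ≥ 1` and `δ ≤ R − 1`, `N(R,δ) = C(R−1,δ)`: the number of permutations of
`Fin R` with inversion number exactly `δ` equals the number of permutations of
`Fin (R−1)` with inversion number at most `δ`. -/
theorem stmt3 (R δ : ℕ) (hR : 1 ≤ R) (hδ : δ ≤ R - 1) :
    Nperm R δ = Cperm (R - 1) δ := by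
  unfold Nperm Cperm
  obtain ⟨n, rfl⟩ : ∃ n, R = n + 1 := ⟨R - 1, (Nat.succ_pred_eq_of_pos hR).symm⟩
  simp only [Nat.add_sub_cancel] at hδ ⊢
  exact stmt3' n δ hδ
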